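/- Nonnegative real numbers a_1, ..., a_n (n ≥ 3) satisfy a_i ≤ ∑_{j ≠ i} a_j for all i if and only if there exist points p_0 = p_n, p_1, ..., p_{n-1} in the Euclidean plane ℝ² such that dist(p_{k-1}, p_k) = a_k for all k = 1, ..., n. -/

import Mathlib

open Finset

noncomputable def pt (x y : ℝ) : EuclideanSpace ℝ (Fin 2) :=
  (WithLp.equiv 2 (Fin 2 → ℝ)).symm ![x, y]

lemma dist_pt (x y x' y' : ℝ) :
    dist (pt x y) (pt x' y') = Real.sqrt ((x - x')^2 + (y - y')^2) := by
  rw [EuclideanSpace.dist_eq]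
  congr 1
  simp [pt, Fin.sum_univ_two, WithLp.equiv_symm_apply, PiLp.toLp_apply, Real.dist_eq, sq_abs]

lemma triangle_exists (b1 b2 b3 : ℝ) (h1 : 0 ≤ b1) (h2 : 0 ≤ b2) (h3 : 0 ≤ b3)
    (t1 : b1 ≤ b2 + b3) (t2 : b2 ≤ b1 + b3) (t3 : b3 ≤ b1 + b2) :
    ∃ B C : EuclideanSpace ℝ (Fin 2), dist B 0 = b1 ∧ dist B C = b2 ∧ dist C 0 = b3 := by
  set x : ℝ := (b1^2 + b3^2 - b2^2) / (2 * b1) with hxdef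
  have hx2 : x^2 ≤ b3^2 := by
    rcases eq_or_lt_of_le h1 with h | h
    · have : x = 0 := by simp [hxdef, ← h]
      rw [this]; simpa using sq_nonneg b3
    · rw [hxdef, div_pow, div_le_iff₀ (by positivity)]
      nlinarith [mul_nonneg (mul_nonneg h2 h3) h1, sq_nonneg (b1 - b3), sq_nonneg (b1 + b3),
        mul_nonneg (sub_nonneg.2 t1) (sub_nonneg.2 t3),
        mul_nonneg (sub_nonneg.2 t2) (sub_nonneg.2 t3),
        mul_nonneg (sub_nonneg.2 t1) (sub_nonneg.2 t2)]
  set y : ℝ := Real.sqrt (b3^2 - x^2) with hydef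
  have hy2 : y^2 = b3^2 - x^2 := Real.sq_sqrt (by linarith)
  have hx : 2 * b1 * x = b1^2 + b3^2 - b2^2 := by
    rcases eq_or_lt_of_le h1 with h | h
    · have hb : b2 = b3 := le_antisymm (by linarith) (by linarith)
      rw [← h, hb]; ring
    · rw [hxdef]; field_simp
  refine ⟨pt b1 0, pt x y, ?_, ?_, ?_⟩
  · have : (0 : EuclideanSpace ℝ (Fin 2)) = pt 0 0 := by
      apply PiLp.ext; intro i; fin_cases i <;> simp [pt, WithLp.equiv_symm_apply, PiLp.toLp_apply]
    rw [this, dist_pt]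
    simpa using Real.sqrt_sq h1
  · rw [dist_pt]
    have : (b1 - x)^2 + (0 - y)^2 = b2^2 := by nlinarith
    rw [this]; exact Real.sqrt_sq h2
  · have : (0 : EuclideanSpace ℝ (Fin 2)) = pt 0 0 := by
      apply PiLp.ext; intro i; fin_cases i <;> simp [pt, WithLp.equiv_symm_apply, PiLp.toLp_apply]
    rw [this, dist_pt]
    have : (x - 0)^2 + (y - 0)^2 = b3^2 := by nlinarith
    rw [this]; exact Real.sqrt_sq h3

lemma forward (n : ℕ) (hn : 3 ≤ n) (a : Fin n → ℝ) (ha : ∀ i, 0 ≤ a i)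
    (hpoly : ∀ i, a i ≤ ∑ j ∈ Finset.univ.erase i, a j) :
    ∃ p : Fin (n+1) → EuclideanSpace ℝ (Fin 2),
      p 0 = p (Fin.last n) ∧ ∀ k : Fin n, dist (p k.castSucc) (p k.succ) = a k := by
  classical
  set T := ∑ j, a j with hT
  have hT0 : 0 ≤ T := Finset.sum_nonneg fun i _ => ha i
  have h2a : ∀ i, 2 * a i ≤ T := by
    intro i
    have h := hpoly i
    rw [Finset.sum_erase_eq_sub (Finset.mem_univ i)] at h
    linarith
  set a' : ℕ → ℝ := fun k => if h : k < n then a ⟨k, h⟩ else 0 with ha'def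
  have ha'0 : ∀ k, 0 ≤ a' k := by
    intro k; simp only [ha'def]; split
    · exact ha _
    · exact le_refl 0
  set S : ℕ → ℝ := fun k => ∑ j ∈ Finset.range k, a' j with hSdef
  have hSmono : Monotone S := fun k l hkl =>
    Finset.sum_le_sum_of_subset_of_nonneg (Finset.range_subset_range.2 hkl) (fun j _ _ => ha'0 j)
  have hS0 : ∀ k, 0 ≤ S k := fun k => Finset.sum_nonneg fun j _ => ha'0 j
  have hSzero : S 0 = 0 := by simp [hSdef]
  have hSn : S n = T := by
    show ∑ j ∈ Finset.range n, a' j = ∑ j, a j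
    rw [← Fin.sum_univ_eq_sum_range a' n]
    exact Finset.sum_congr rfl fun i _ => by simp [ha'def, i.isLt]
  have hSsucc : ∀ k, S (k+1) = S k + a' k := fun k => Finset.sum_range_succ a' k
  rcases eq_or_lt_of_le hT0 with hT0' | hTpos
  · refine ⟨fun _ => 0, rfl, fun k => ?_⟩
    have hk : a k = 0 := le_antisymm (by linarith [h2a k]) (ha k)
    simp [hk]
  · set P : ℕ → Prop := fun m => S m ≤ T / 2 with hPdef
    set i := Nat.findGreatest P n with hidef
    have hP0 : P 0 := by rw [hPdef]; simp only; rw [hSzero]; linarith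
    have hi1 : S i ≤ T/2 := Nat.findGreatest_spec (Nat.zero_le n) hP0
    have hi_le : i ≤ n := Nat.findGreatest_le n
    have hi_lt : i < n := by
      rcases lt_or_eq_of_le hi_le with h | h
      · exact h
      · exfalso; rw [h, hSn] at hi1; linarith
    have hi2 : T/2 < S (i+1) := by
      by_contra hcon
      push_neg at hcon
      have := Nat.le_findGreatest hi_lt (show P (i+1) from hcon)
      omega
    set b1 := S i with hb1def
    set b2 := a' i with hb2def
    set b3 := T - S (i+1) with hb3def
    have hb1 : 0 ≤ b1 := hS0 i
    have hb2 : 0 ≤ b2 := ha'0 i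
    have hb3 : 0 ≤ b3 := by
      have := hSmono (Nat.succ_le_of_lt hi_lt)
      rw [hSn] at this
      rw [hb3def]; linarith
    have hsum : b1 + b2 + b3 = T := by
      rw [hb1def, hb2def, hb3def, hSsucc i]; ring
    have hb2half : b2 ≤ T/2 := by
      have := h2a ⟨i, hi_lt⟩
      rw [hb2def, ha'def]
      simp only [hi_lt, dif_pos]
      linarith
    obtain ⟨B, C, hB, hBC, hC⟩ :=
      triangle_exists b1 b2 b3 hb1 hb2 hb3 (by linarith) (by linarith) (by linarith)
    rw [dist_zero_right] at hB
    rw [dist_zero_right] at hC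
    set q : ℕ → EuclideanSpace ℝ (Fin 2) :=
      fun k => if k ≤ i then (S k / b1) • B else ((T - S k)/b3) • C with hqdef
    have key : ∀ (v : EuclideanSpace ℝ (Fin 2)) (x y : ℝ),
        dist (x • v) (y • v) = |x - y| * ‖v‖ := by
      intro v x y
      rw [dist_eq_norm, ← sub_smul, norm_smul, Real.norm_eq_abs]
    have hqi : q i = B := by
      rcases eq_or_ne b1 0 with h | h
      · have hBz : B = 0 := norm_eq_zero.1 (by rw [hB, h])
        simp [hqdef, hBz]
      · simp [hqdef, ← hb1def, div_self h]
    have hqi1 : q (i+1) = C := by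
      rcases eq_or_ne b3 0 with h | h
      · have hCz : C = 0 := norm_eq_zero.1 (by rw [hC, h])
        simp [hqdef, hCz]
      · rw [hqdef]
        simp only [if_neg (by omega : ¬ i + 1 ≤ i)]
        rw [← hb3def, div_self h, one_smul]
    have hedge : ∀ k, k < n → dist (q k) (q (k+1)) = a' k := by
      intro k hk
      by_cases h1 : k + 1 ≤ i
      · have h0 : k ≤ i := by omega
        rw [hqdef]
        simp only [if_pos h0, if_pos h1]
        rw [key, hB]
        rcases eq_or_ne b1 0 with hb | hb
        · have hk1 : S (k+1) ≤ 0 := by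
            have := hSmono h1; rw [← hb1def] at this; linarith
          have hk1' : S (k+1) = 0 := le_antisymm hk1 (hS0 _)
          have hk0 : S k = 0 := le_antisymm (by
            have := hSmono (Nat.le_succ k); linarith) (hS0 _)
          have hak : a' k = 0 := by have := hSsucc k; rw [hk1', hk0] at this; linarith
          rw [hb, hak]; simp
        · have hb1pos : 0 < b1 := lt_of_le_of_ne hb1 (Ne.symm hb)
          rw [abs_sub_comm, div_sub_div_same, hSsucc, add_sub_cancel_left,
            abs_of_nonneg (div_nonneg (ha'0 k) hb1), div_mul_cancel₀ _ hb]
      · by_cases h2 : k ≤ i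
        · have hki : k = i := by omega
          subst hki
          rw [hqi, hqi1, hBC, hb2def]
        · have h2' : ¬ (k + 1 ≤ i) := by omega
          rw [hqdef]
          simp only [if_neg h2, if_neg h2']
          rw [key, hC]
          rcases eq_or_ne b3 0 with hb | hb
          · have h3 : S (i+1) = T := by rw [hb3def] at hb; linarith
            have hklo : S (i+1) ≤ S k := hSmono (by omega)
            have hkhi : S (k+1) ≤ T := by
              have := hSmono (by omega : k + 1 ≤ n); rw [hSn] at this; exact this
            have hklo' : S k ≤ S (k+1) := hSmono (Nat.le_succ k)
            have e1 : S k = T := by linarith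
            have e2 : S (k+1) = T := by linarith
            have hak : a' k = 0 := by have := hSsucc k; rw [e1, e2] at this; linarith
            rw [hb, hak]; simp
          · have hb3pos : 0 < b3 := lt_of_le_of_ne hb3 (Ne.symm hb)
            rw [div_sub_div_same, hSsucc]
            have : T - S k - (T - (S k + a' k)) = a' k := by ring
            rw [this, abs_of_nonneg (div_nonneg (ha'0 k) hb3), div_mul_cancel₀ _ hb]
    have hq0 : q 0 = 0 := by
      rw [hqdef]
      simp only [if_pos (Nat.zero_le i)]
      rw [hSzero]; simp
    have hqn : q n = 0 := by
      rw [hqdef]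
      simp only [if_neg (by omega : ¬ n ≤ i)]
      rw [hSn]; simp
    refine ⟨fun j => q j.val, by simp [hq0, hqn, Fin.last], fun k => ?_⟩
    have hdq : dist (q (k.castSucc).val) (q (k.succ).val) = a' k.val := by
      simp only [Fin.coe_castSucc, Fin.val_succ]
      exact hedge k.val k.isLt
    rw [hdq, ha'def]
    simp [k.isLt]


open scoped Fin.NatCast Fin.CommRing in
lemma backward (n : ℕ) (hn : 3 ≤ n) (a : Fin n → ℝ)
    (p : Fin (n+1) → EuclideanSpace ℝ (Fin 2))
    (hp0 : p 0 = p (Fin.last n))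
    (hd : ∀ k : Fin n, dist (p k.castSucc) (p k.succ) = a k) :
    ∀ i, a i ≤ ∑ j ∈ Finset.univ.erase i, a j := by
  haveI : NeZero n := ⟨by omega⟩
  intro i
  set v : Fin n → EuclideanSpace ℝ (Fin 2) := fun j => p j.castSucc with hvdef
  have hone : (1 : Fin n).val = 1 := by
    rw [Fin.val_one']; exact Nat.mod_eq_of_lt (by omega)
  have hedge : ∀ j : Fin n, dist (v j) (v (j+1)) = a j := by
    intro j
    have hv2 : v (j+1) = p j.succ := by
      by_cases h : j.val + 1 < n
      · have h1 : ((j + 1 : Fin n) : ℕ) = j.val + 1 := by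
          rw [Fin.val_add, hone, Nat.mod_eq_of_lt h]
        have h2 : (j + 1 : Fin n).castSucc = j.succ := by
          ext; simp [h1]
        rw [hvdef]
        simp only
        rw [h2]
      · have hjv : j.val + 1 = n := by omega
        have h1 : ((j + 1 : Fin n) : ℕ) = 0 := by
          rw [Fin.val_add, hone, hjv, Nat.mod_self]
        rw [hvdef]
        simp only
        have h2 : (j + 1 : Fin n).castSucc = (0 : Fin (n+1)) := by
          ext; simp [h1]
        have h3 : j.succ = Fin.last n := by
          ext; simp [Fin.val_succ, hjv]
        rw [h2, h3, hp0]
    rw [← hd j, hv2]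
  have hkey : ∀ j : Fin n, j + 1 + ((n - 1 : ℕ) : Fin n) = j := by
    intro j
    have h1 : ((n - 1 : ℕ) : Fin n) + 1 = 0 := by
      have h2 : ((n - 1 : ℕ) : Fin n) + ((1:ℕ) : Fin n) = ((n - 1 + 1 : ℕ) : Fin n) :=
        (Nat.cast_add _ _).symm
      rw [Nat.cast_one] at h2
      rw [h2, show n - 1 + 1 = n by omega, Fin.natCast_self]
    calc j + 1 + ((n-1:ℕ) : Fin n) = j + (((n-1:ℕ):Fin n) + 1) := by ring
      _ = j + 0 := by rw [h1]
      _ = j := add_zero j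
  set w : ℕ → EuclideanSpace ℝ (Fin 2) := fun m => v (i + 1 + (m : Fin n)) with hwdef
  have hw0 : w 0 = v (i + 1) := by simp [hwdef]
  have hstep : ∀ m : ℕ, dist (w m) (w (m+1)) = a (i + 1 + (m : Fin n)) := by
    intro m
    have h1 : w (m+1) = v (i + 1 + (m : Fin n) + 1) := by
      rw [hwdef]
      simp only
      congr 1
      push_cast
      ring
    rw [h1]
    exact hedge _
  have hwlast : w (n-1) = v i := by
    rw [hwdef]
    simp only
    rw [hkey i]
  have hbound := dist_le_range_sum_dist w (n-1)
  rw [hw0, hwlast, dist_comm, hedge i] at hbound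
  have hsum : ∑ m ∈ Finset.range (n-1), dist (w m) (w (m+1))
      = ∑ j ∈ Finset.univ.erase i, a j := by
    rw [Finset.sum_congr rfl (fun m _ => hstep m)]
    refine Finset.sum_bij' (fun m _ => i + 1 + (m : Fin n))
      (fun j _ => ((j - (i+1) : Fin n)).val) ?_ ?_ ?_ ?_ ?_
    · intro m hm
      rw [Finset.mem_range] at hm
      rw [Finset.mem_erase]
      refine ⟨?_, Finset.mem_univ _⟩
      intro hcon
      replace hcon : i + 1 + (m : Fin n) = i := hcon
      rw [add_assoc] at hcon
      have h2 : (1 : Fin n) + (m : Fin n) = 0 := by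
        have := hcon
        nth_rewrite 2 [← add_zero i] at this
        exact add_left_cancel this
      have h3 : ((1 : Fin n) + (m : Fin n)).val = 1 + m := by
        rw [Fin.val_add, hone, Fin.val_cast_of_lt (by omega), Nat.mod_eq_of_lt (by omega)]
      rw [h2] at h3
      simp only [Fin.val_zero] at h3
      omega
    · intro j hj
      rw [Finset.mem_erase] at hj
      rw [Finset.mem_range]
      have hlt : ((j - (i+1) : Fin n)).val < n := (j - (i+1)).isLt
      rcases Nat.lt_or_ge ((j - (i+1) : Fin n)).val (n-1) with h | h
      · exact h
      · exfalso
        have heq : ((j - (i+1) : Fin n)).val = n - 1 := by omega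
        have h2 : (j - (i+1) : Fin n) = ((n-1 : ℕ) : Fin n) := by
          rw [← Fin.cast_val_eq_self (j - (i+1)), heq]
        have h3 : j = i + 1 + ((n-1:ℕ) : Fin n) := by
          rw [← h2, add_sub_cancel]
        rw [hkey i] at h3
        exact hj.1 h3
    · intro m hm
      rw [Finset.mem_range] at hm
      show (i + 1 + (m : Fin n) - (i + 1)).val = m
      rw [add_sub_cancel_left, Fin.val_cast_of_lt (by omega)]
    · intro j hj
      show i + 1 + ((((j - (i+1) : Fin n)).val : ℕ) : Fin n) = j
      rw [Fin.cast_val_eq_self, add_sub_cancel]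
    · intro m hm
      rfl
  rw [hsum] at hbound
  exact hbound


theorem stmt4 (n : ℕ) (hn : 3 ≤ n) (a : Fin n → ℝ) (ha : ∀ i, 0 ≤ a i) :
    (∀ i, a i ≤ ∑ j ∈ Finset.univ.erase i, a j) ↔
      ∃ p : Fin (n+1) → EuclideanSpace ℝ (Fin 2),
        p 0 = p (Fin.last n) ∧ ∀ k : Fin n, dist (p k.castSucc) (p k.succ) = a k := by
  constructor
  · exact forward n hn a ha
  · rintro ⟨p, hp0, hd⟩
    exact backward n hn a p hp0 hd
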